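/- Let (R, m) be a Noetherian local ring, I an m-primary ideal, and J ⊆ I a reduction of I. Then the Hilbert–Samuel multiplicities coincide: e(J, R) = e(I, R). -/

import Mathlib

/-- The length of an `R`-module `M`, computed as the Krull dimension of its
lattice of submodules (equal to the usual length for finite-length modules). -/
noncomputable def moduleLength (R M : Type*) [CommRing R] [AddCommGroup M] [Module R M] : ℕ :=
  ((Order.krullDim (Submodule R M)).unbotD 0).toNat

/-- `e` is the Hilbert–Samuel multiplicity of the ideal `I` in the `d`-dimensional
ring `R`: `e = lim_n d! · length(R/Iⁿ)/nᵈ`, i.e. `d!` times the leading coefficient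
of the Hilbert–Samuel polynomial `n ↦ length(R/Iⁿ)`. -/
noncomputable def HasHSMultiplicity (R : Type*) [CommRing R] (I : Ideal R) (d : ℕ) (e : ℝ) : Prop :=
  Filter.Tendsto
    (fun n : ℕ => ((Nat.factorial d : ℝ) * (moduleLength R (R ⧸ I ^ n) : ℝ)) / (n : ℝ) ^ d)
    Filter.atTop (nhds e)

/-- Krull dimension of the submodule lattice of `R ⧸ B` is at most that of `R ⧸ A`
when `A ≤ B`. -/
lemma kdim_quot_le {R : Type*} [CommRing R] {A B : Ideal R} (h : A ≤ B) :
    Order.krullDim (Submodule R (R ⧸ B)) ≤ Order.krullDim (Submodule R (R ⧸ A)) := by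
  have hsurj : Function.Surjective (Submodule.mapQ A B LinearMap.id (by simpa using h)) := by
    rintro ⟨x⟩
    exact ⟨Submodule.Quotient.mk x, rfl⟩
  apply Order.krullDim_le_of_strictMono
    (fun N => N.comap (Submodule.mapQ A B LinearMap.id (by simpa using h)))
  intro N1 N2 hlt
  exact lt_of_le_of_ne (Submodule.comap_mono hlt.le)
    (fun he => hlt.ne (Submodule.comap_injective_of_surjective hsurj he))

lemma toNat_unbot_mono {x y : WithBot ℕ∞} (hxy : x ≤ y) (hy : y ≠ ⊤) :
    (x.unbotD 0).toNat ≤ (y.unbotD 0).toNat := by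
  cases x with
  | bot => simp
  | coe x' =>
    cases y with
    | bot => simp at hxy
    | coe y' =>
      simp only [WithBot.unbotD_coe]
      exact ENat.toNat_le_toNat (by exact_mod_cast hxy) (by simpa using hy)

lemma pow_eq_of_red {R : Type*} [CommRing R] {I J : Ideal R} {n : ℕ}
    (hred : I ^ (n + 1) = J * I ^ n) : ∀ k, I ^ (n + k) = J ^ k * I ^ n := by
  intro k
  induction k with
  | zero => simp
  | succ k ih =>
    have h1 : I ^ (n + (k+1)) = I * I ^ (n + k) := by ring
    rw [h1, ih, show I * (J ^ k * I ^ n) = J ^ k * I ^ (n+1) by ring, hred]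
    ring

/-- If `J ⊆ I` is a reduction of the `m`-primary ideal `I` in a Noetherian local
ring `R`, then the Hilbert–Samuel multiplicities coincide: `e(J,R) = e(I,R)`. -/
theorem reduction_multiplicity_eq (R : Type*) [CommRing R] [IsNoetherianRing R]
    [IsLocalRing R] (d : ℕ) (hd : ringKrullDim R = d)
    (I J : Ideal R) (hprim : I.radical = IsLocalRing.maximalIdeal R)
    (hJI : J ≤ I) (hred : ∃ n : ℕ, I ^ (n + 1) = J * I ^ n)
    (eJ eI : ℝ) (heJ : HasHSMultiplicity R J d eJ) (heI : HasHSMultiplicity R I d eI) :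
    eJ = eI := by
  obtain ⟨n, hred⟩ := hred
  -- ideal power comparisons
  have hIJpow : ∀ k : ℕ, I ^ (k + n) ≤ J ^ k := by
    intro k
    rw [show k + n = n + k by ring, pow_eq_of_red hred k]
    rw [mul_comm]
    exact Ideal.mul_le_right
  have hJIpow : ∀ k : ℕ, J ^ k ≤ I ^ k := fun k => Ideal.pow_right_mono hJI k
  -- Krull dimension (length) comparisons
  set κ : Ideal R → WithBot ℕ∞ := fun A => Order.krullDim (Submodule R (R ⧸ A)) with hκ
  have hk1 : ∀ k : ℕ, κ (I ^ k) ≤ κ (J ^ k) := fun k => kdim_quot_le (hJIpow k)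
  have hk2 : ∀ k : ℕ, κ (J ^ k) ≤ κ (I ^ (k + n)) := fun k => kdim_quot_le (hIJpow k)
  have hml : ∀ A : Ideal R, moduleLength R (R ⧸ A) = ((κ A).unbotD 0).toNat := fun A => rfl
  -- eventual sandwich on lengths
  have hsand : ∀ᶠ k in Filter.atTop,
      moduleLength R (R ⧸ I ^ k) ≤ moduleLength R (R ⧸ J ^ k) ∧
      moduleLength R (R ⧸ J ^ k) ≤ moduleLength R (R ⧸ I ^ (k + n)) := by
    by_cases hfin : ∀ m : ℕ, κ (I ^ m) ≠ ⊤
    · refine Filter.Eventually.of_forall (fun k => ?_)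
      have h2 : κ (J ^ k) ≠ ⊤ := fun h => hfin (k + n) (top_le_iff.mp (h ▸ hk2 k))
      exact ⟨by rw [hml, hml]; exact toNat_unbot_mono (hk1 k) h2,
             by rw [hml, hml]; exact toNat_unbot_mono (hk2 k) (hfin (k + n))⟩
    · push_neg at hfin
      obtain ⟨m, hm⟩ := hfin
      rw [Filter.eventually_atTop]
      refine ⟨m, fun k hk => ?_⟩
      have hIk : κ (I ^ k) = ⊤ := by
        have : κ (I ^ m) ≤ κ (I ^ k) := kdim_quot_le (Ideal.pow_le_pow_right hk)
        exact top_le_iff.mp (hm ▸ this)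
      have hIkn : κ (I ^ (k + n)) = ⊤ := by
        have : κ (I ^ k) ≤ κ (I ^ (k + n)) :=
          kdim_quot_le (Ideal.pow_le_pow_right (by omega))
        exact top_le_iff.mp (hIk ▸ this)
      have hJk : κ (J ^ k) = ⊤ := top_le_iff.mp (hIk ▸ hk1 k)
      rw [hml, hml, hml, hIk, hIkn, hJk]
      simp
  -- analytic part
  set f : ℕ → ℝ := fun k =>
    ((Nat.factorial d : ℝ) * (moduleLength R (R ⧸ I ^ k) : ℝ)) / (k : ℝ) ^ d with hf
  set fJ : ℕ → ℝ := fun k =>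
    ((Nat.factorial d : ℝ) * (moduleLength R (R ⧸ J ^ k) : ℝ)) / (k : ℝ) ^ d with hfJ
  set g : ℕ → ℝ := fun k =>
    ((Nat.factorial d : ℝ) * (moduleLength R (R ⧸ I ^ (k + n)) : ℝ)) / (k : ℝ) ^ d with hg
  have hIf : Filter.Tendsto f Filter.atTop (nhds eI) := heI
  have hJf : Filter.Tendsto fJ Filter.atTop (nhds eJ) := heJ
  have hshift : Filter.Tendsto (fun k => f (k + n)) Filter.atTop (nhds eI) :=
    hIf.comp (Filter.tendsto_add_atTop_nat n)
  have hratio : Filter.Tendsto (fun k : ℕ => (1 + (n : ℝ) / (k : ℝ)) ^ d)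
      Filter.atTop (nhds 1) := by
    have h0 : Filter.Tendsto (fun k : ℕ => (n : ℝ) / (k : ℝ)) Filter.atTop (nhds 0) :=
      tendsto_const_div_atTop_nhds_zero_nat (n : ℝ)
    have := ((tendsto_const_nhds (x := (1 : ℝ)) (f := Filter.atTop (α := ℕ))).add h0).pow d
    simpa using this
  have hgI : Filter.Tendsto g Filter.atTop (nhds eI) := by
    have hmul : Filter.Tendsto (fun k => f (k + n) * (1 + (n : ℝ) / (k : ℝ)) ^ d)
        Filter.atTop (nhds (eI * 1)) := hshift.mul hratio
    rw [mul_one] at hmul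
    refine hmul.congr' ?_
    filter_upwards [Filter.eventually_ge_atTop 1] with k hk
    have hk0 : (k : ℝ) ≠ 0 := Nat.cast_ne_zero.mpr (by omega)
    have hkn0 : ((k + n : ℕ) : ℝ) ≠ 0 := Nat.cast_ne_zero.mpr (by omega)
    simp only [hf, hg]
    push_cast
    field_simp
    rw [mul_assoc, div_pow, div_mul_cancel₀ _ (pow_ne_zero d hk0)]
  have hsq : Filter.Tendsto fJ Filter.atTop (nhds eI) := by
    refine tendsto_of_tendsto_of_tendsto_of_le_of_le' hIf hgI ?_ ?_
    · filter_upwards [hsand] with k hk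
      have hnum : ((Nat.factorial d : ℝ) * (moduleLength R (R ⧸ I ^ k) : ℝ)) ≤
          ((Nat.factorial d : ℝ) * (moduleLength R (R ⧸ J ^ k) : ℝ)) := by
        have : (moduleLength R (R ⧸ I ^ k) : ℝ) ≤ (moduleLength R (R ⧸ J ^ k) : ℝ) := by
          exact_mod_cast hk.1
        exact mul_le_mul_of_nonneg_left this (by positivity)
      have hden : (0 : ℝ) ≤ (k : ℝ) ^ d := by positivity
      exact div_le_div_of_nonneg_right hnum hden
    · filter_upwards [hsand] with k hk
      have hnum : ((Nat.factorial d : ℝ) * (moduleLength R (R ⧸ J ^ k) : ℝ)) ≤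
          ((Nat.factorial d : ℝ) * (moduleLength R (R ⧸ I ^ (k + n)) : ℝ)) := by
        have : (moduleLength R (R ⧸ J ^ k) : ℝ) ≤ (moduleLength R (R ⧸ I ^ (k + n)) : ℝ) := by
          exact_mod_cast hk.2
        exact mul_le_mul_of_nonneg_left this (by positivity)
      have hden : (0 : ℝ) ≤ (k : ℝ) ^ d := by positivity
      exact div_le_div_of_nonneg_right hnum hden
  exact tendsto_nhds_unique hJf hsq
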